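/- Let A be an n×n complex matrix whose Hermitian part Re(A) = (A + A^H)/2 is positive definite, let P be an n×n Hermitian positive definite matrix, let α > 0, and let b ∈ ℂ^n. For any initial guess x^0 ∈ ℂ^n, define the PHSS sequence by (αP + Re(A))x^{k+1/2} = (αP − i·Im(A))x^k + b and (αP + i·Im(A))x^{k+1} = (αP − Re(A))x^{k+1/2} + b. Then the sequence (x^k) converges to the unique solution x* of Ax = b. -/

import Mathlib

open Matrix
open scoped ComplexOrder

namespace PHSS

variable {n : ℕ}

noncomputable def enorm (v : Fin n → ℂ) : ℝ := ‖(WithLp.equiv 2 (Fin n → ℂ)).symm v‖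

lemma enorm_nonneg (v : Fin n → ℂ) : 0 ≤ enorm v := norm_nonneg _

lemma enorm_sq (v : Fin n → ℂ) : enorm v ^ 2 = (star v ⬝ᵥ v).re := by
  rw [enorm, ← inner_self_eq_norm_sq (𝕜 := ℂ)]
  rw [dotProduct_comm]; rfl

lemma enorm_eq_zero {v : Fin n → ℂ} : enorm v = 0 ↔ v = 0 := by
  rw [enorm, norm_eq_zero]
  constructor
  · intro h
    simpa using congrArg (WithLp.equiv 2 (Fin n → ℂ)) h
  · rintro rfl
    simp

lemma enorm_pos {v : Fin n → ℂ} (hv : v ≠ 0) : 0 < enorm v :=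
  lt_of_le_of_ne (enorm_nonneg v) fun h => hv (enorm_eq_zero.mp h.symm)

lemma quad (X Y : Matrix (Fin n) (Fin n) ℂ) (v : Fin n → ℂ) :
    star (X *ᵥ v) ⬝ᵥ (Y *ᵥ v) = star v ⬝ᵥ ((Xᴴ * Y) *ᵥ v) := by
  rw [star_mulVec, ← dotProduct_mulVec, mulVec_mulVec]

lemma key_lt {B : Matrix (Fin n) (Fin n) ℂ} (hB : Bᴴ = B)
    {y : Fin n → ℂ}
    (hpos : 0 < (star y ⬝ᵥ (B *ᵥ y)).re) :
    enorm ((1 - B) *ᵥ y) < enorm ((1 + B) *ᵥ y) := by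
  have hmat : (1 + B)ᴴ * (1 + B) = (1 - B)ᴴ * (1 - B) + (B + B + B + B) := by
    rw [conjTranspose_add, conjTranspose_sub, conjTranspose_one, hB]
    noncomm_ring
  have hsq : enorm ((1 + B) *ᵥ y) ^ 2
      = enorm ((1 - B) *ᵥ y) ^ 2 + 4 * (star y ⬝ᵥ (B *ᵥ y)).re := by
    rw [enorm_sq, enorm_sq, quad, quad, hmat, add_mulVec, dotProduct_add, Complex.add_re]
    have : (star y ⬝ᵥ ((B + B + B + B) *ᵥ y)).re = 4 * (star y ⬝ᵥ (B *ᵥ y)).re := by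
      simp only [add_mulVec, dotProduct_add, Complex.add_re]
      ring
    rw [this]
  have h2 : enorm ((1 - B) *ᵥ y) ^ 2 < enorm ((1 + B) *ᵥ y) ^ 2 := by
    rw [hsq]; linarith
  exact lt_of_pow_lt_pow_left₀ 2 (enorm_nonneg _) h2

lemma key_eq {K : Matrix (Fin n) (Fin n) ℂ} (hK : Kᴴ = -K) (y : Fin n → ℂ) :
    enorm ((1 - K) *ᵥ y) = enorm ((1 + K) *ᵥ y) := by
  have hmat : (1 + K)ᴴ * (1 + K) = (1 - K)ᴴ * (1 - K) := by
    rw [conjTranspose_add, conjTranspose_sub, conjTranspose_one, hK]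
    noncomm_ring
  have hsq : enorm ((1 + K) *ᵥ y) ^ 2 = enorm ((1 - K) *ᵥ y) ^ 2 := by
    rw [enorm_sq, enorm_sq, quad, quad, hmat]
  have := congrArg Real.sqrt hsq
  rw [Real.sqrt_sq (enorm_nonneg _), Real.sqrt_sq (enorm_nonneg _)] at this
  exact this.symm

lemma star_quad (M : Matrix (Fin n) (Fin n) ℂ) (v : Fin n → ℂ) :
    star (star v ⬝ᵥ (M *ᵥ v)) = star v ⬝ᵥ (Mᴴ *ᵥ v) := by
  rw [star_dotProduct, star_star, star_mulVec, ← dotProduct_mulVec]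

lemma skew_re_zero {K : Matrix (Fin n) (Fin n) ℂ} (hK : Kᴴ = -K) (v : Fin n → ℂ) :
    (star v ⬝ᵥ (K *ᵥ v)).re = 0 := by
  have h1 : star (star v ⬝ᵥ (K *ᵥ v)) = -(star v ⬝ᵥ (K *ᵥ v)) := by
    rw [star_quad, hK, neg_mulVec, dotProduct_neg]
  have := congrArg Complex.re h1
  simp only [Complex.star_def, Complex.conj_re, Complex.neg_re] at this
  linarith

lemma isUnit_of_posRe {M : Matrix (Fin n) (Fin n) ℂ}
    (h : ∀ v, v ≠ 0 → 0 < (star v ⬝ᵥ (M *ᵥ v)).re) : IsUnit M := by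
  rw [← Matrix.mulVec_injective_iff_isUnit]
  intro a b hab
  by_contra hne
  have hv : a - b ≠ 0 := sub_ne_zero.mpr hne
  have h0 : M *ᵥ (a - b) = 0 := by
    rw [mulVec_sub, show M.mulVec a = M.mulVec b from hab, sub_self]
  have := h _ hv
  rw [h0] at this
  simp at this

lemma cancel₁ {M : Matrix (Fin n) (Fin n) ℂ} (h : IsUnit M) (X : Matrix (Fin n) (Fin n) ℂ) :
    M * (M⁻¹ * X) = X := by
  rw [← Matrix.mul_assoc, Matrix.mul_nonsing_inv _ ((Matrix.isUnit_iff_isUnit_det _).mp h),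
    Matrix.one_mul]

lemma cancel₂ {M : Matrix (Fin n) (Fin n) ℂ} (h : IsUnit M) (X : Matrix (Fin n) (Fin n) ℂ) :
    M⁻¹ * (M * X) = X := by
  rw [← Matrix.mul_assoc, Matrix.nonsing_inv_mul _ ((Matrix.isUnit_iff_isUnit_det _).mp h),
    Matrix.one_mul]

lemma mulVec_cancel {M : Matrix (Fin n) (Fin n) ℂ} (h : IsUnit M) (v : Fin n → ℂ) :
    M⁻¹ *ᵥ (M *ᵥ v) = v := by
  rw [mulVec_mulVec, Matrix.nonsing_inv_mul _ ((Matrix.isUnit_iff_isUnit_det _).mp h), one_mulVec]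

lemma mulVec_cancel' {M : Matrix (Fin n) (Fin n) ℂ} (h : IsUnit M) (v : Fin n → ℂ) :
    M *ᵥ (M⁻¹ *ᵥ v) = v := by
  rw [mulVec_mulVec, Matrix.mul_nonsing_inv _ ((Matrix.isUnit_iff_isUnit_det _).mp h), one_mulVec]

lemma toEuc_apply (M : Matrix (Fin n) (Fin n) ℂ) (v : Fin n → ℂ) :
    LinearMap.toContinuousLinearMap (Matrix.toEuclideanLin M)
      ((WithLp.equiv 2 (Fin n → ℂ)).symm v)
      = (WithLp.equiv 2 (Fin n → ℂ)).symm (M *ᵥ v) := by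
  simp [Matrix.toEuclideanLin_apply]

lemma enorm_mulVec_le (M : Matrix (Fin n) (Fin n) ℂ) :
    ∃ C : ℝ, 0 ≤ C ∧ ∀ v, enorm (M *ᵥ v) ≤ C * enorm v := by
  set f := LinearMap.toContinuousLinearMap (Matrix.toEuclideanLin M) with hf
  refine ⟨‖f‖, norm_nonneg _, fun v => ?_⟩
  have h := f.le_opNorm ((WithLp.equiv 2 (Fin n → ℂ)).symm v)
  rw [hf, toEuc_apply] at h
  exact h

lemma exists_contraction (hn : 0 < n) (M : Matrix (Fin n) (Fin n) ℂ)
    (h : ∀ v, v ≠ 0 → enorm (M *ᵥ v) < enorm v) :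
    ∃ c : ℝ, 0 ≤ c ∧ c < 1 ∧ ∀ v, enorm (M *ᵥ v) ≤ c * enorm v := by
  set f := LinearMap.toContinuousLinearMap (Matrix.toEuclideanLin M) with hf
  have hcont : Continuous fun y : EuclideanSpace ℂ (Fin n) => ‖f y‖ :=
    f.continuous.norm
  have hsph : (Metric.sphere (0 : EuclideanSpace ℂ (Fin n)) 1).Nonempty := by
    refine ⟨EuclideanSpace.single ⟨0, hn⟩ (1 : ℂ), ?_⟩
    simp [EuclideanSpace.norm_single]
  obtain ⟨z, hz, hzmax⟩ := (isCompact_sphere (0 : EuclideanSpace ℂ (Fin n)) 1).exists_isMaxOn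
    hsph hcont.continuousOn
  have hznorm : ‖z‖ = 1 := by simpa using hz
  have hz0 : z ≠ 0 := by intro h0; rw [h0] at hznorm; simp at hznorm
  set c := ‖f z‖ with hc
  have hkey : ∀ y : EuclideanSpace ℂ (Fin n),
      ‖f y‖ = enorm (M *ᵥ (WithLp.equiv 2 (Fin n → ℂ) y)) := by
    intro y
    have : f y = (WithLp.equiv 2 (Fin n → ℂ)).symm (M *ᵥ (WithLp.equiv 2 (Fin n → ℂ) y)) := by
      rw [hf]
      have := toEuc_apply M (WithLp.equiv 2 (Fin n → ℂ) y)
      simpa using this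
    rw [this]; rfl
  have hynorm : ∀ y : EuclideanSpace ℂ (Fin n), ‖y‖ = enorm (WithLp.equiv 2 (Fin n → ℂ) y) := by
    intro y; rw [enorm]; simp
  have hc1 : c < 1 := by
    have hzv : (WithLp.equiv 2 (Fin n → ℂ)) z ≠ 0 := by
      intro h0
      apply hz0
      simpa using congrArg (WithLp.equiv 2 (Fin n → ℂ)).symm h0
    have := h _ hzv
    rw [hc, hkey]
    calc enorm (M *ᵥ (WithLp.equiv 2 (Fin n → ℂ)) z)
        < enorm ((WithLp.equiv 2 (Fin n → ℂ)) z) := this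
    _ = 1 := by rw [← hynorm, hznorm]
  refine ⟨c, norm_nonneg _, hc1, fun v => ?_⟩
  by_cases hv : v = 0
  · subst hv; simp [enorm, mulVec_zero]
  · set y : EuclideanSpace ℂ (Fin n) := (WithLp.equiv 2 (Fin n → ℂ)).symm v with hy
    have hyv : (WithLp.equiv 2 (Fin n → ℂ)) y = v := by rw [hy]; simp
    have hyn : ‖y‖ ≠ 0 := by
      rw [hy]
      simpa [enorm, norm_eq_zero] using fun h0 : (WithLp.equiv 2 (Fin n → ℂ)).symm v = 0 =>
        hv (by simpa using congrArg (WithLp.equiv 2 (Fin n → ℂ)) h0)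
    set u : EuclideanSpace ℂ (Fin n) := ((‖y‖ : ℂ))⁻¹ • y with hu
    have hun : ‖u‖ = 1 := by
      rw [hu, norm_smul]
      simp [norm_inv, hyn]
    have husph : u ∈ Metric.sphere (0 : EuclideanSpace ℂ (Fin n)) 1 := by
      simp [hun]
    have hfu : ‖f u‖ ≤ c := hzmax husph
    have hfy : ‖f y‖ = ‖y‖ * ‖f u‖ := by
      have : f u = ((‖y‖ : ℂ))⁻¹ • f y := by rw [hu, _root_.map_smul]
      rw [this, norm_smul]
      simp only [norm_inv, Complex.norm_real, Real.norm_eq_abs, abs_norm]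
      field_simp
    have : ‖f y‖ ≤ c * ‖y‖ := by
      rw [hfy]
      calc ‖y‖ * ‖f u‖ ≤ ‖y‖ * c := by
            apply mul_le_mul_of_nonneg_left hfu (norm_nonneg _)
      _ = c * ‖y‖ := mul_comm _ _
    rw [hkey, hyv, hynorm y, hyv] at this
    exact this

open scoped MatrixOrder in
lemma exists_sqrt {M : Matrix (Fin n) (Fin n) ℂ} (hM : M.PosSemidef) :
    ∃ Q : Matrix (Fin n) (Fin n) ℂ, Qᴴ = Q ∧ Q * Q = M :=
  ⟨CFC.sqrt M, (Matrix.nonneg_iff_posSemidef.mp (CFC.sqrt_nonneg M)).isHermitian,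
    CFC.sqrt_mul_sqrt_self M hM.nonneg⟩

end PHSS

open PHSS

/-- Unconditional convergence of the PHSS iteration: if `Re(A)` is positive definite, `P` is
Hermitian positive definite, `α > 0`, and the sequence `(x^k)` is produced by the two PHSS
half-steps, then `(x^k)` converges to the unique solution `x*` of `A x = b`. -/
theorem stmt_4 {n : ℕ} (A P : Matrix (Fin n) (Fin n) ℂ)
    (hRe : ((1 / 2 : ℂ) • (A + Aᴴ)).PosDef) (hP : P.PosDef)
    (α : ℝ) (hα : 0 < α) (b : Fin n → ℂ)
    (x xh : ℕ → Fin n → ℂ)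
    (hhalf : ∀ k : ℕ, ((α : ℂ) • P + (1 / 2 : ℂ) • (A + Aᴴ)).mulVec (xh k) =
      ((α : ℂ) • P - Complex.I • ((1 / (2 * Complex.I) : ℂ) • (A - Aᴴ))).mulVec (x k) + b)
    (hfull : ∀ k : ℕ, ((α : ℂ) • P + Complex.I • ((1 / (2 * Complex.I) : ℂ) • (A - Aᴴ))).mulVec
        (x (k + 1)) =
      ((α : ℂ) • P - (1 / 2 : ℂ) • (A + Aᴴ)).mulVec (xh k) + b)
    (xstar : Fin n → ℂ) (hstar : A.mulVec xstar = b) :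
    (∃! y : Fin n → ℂ, A.mulVec y = b) ∧
      Filter.Tendsto x Filter.atTop (nhds xstar) := by
  set H : Matrix (Fin n) (Fin n) ℂ := (1 / 2 : ℂ) • (A + Aᴴ) with hHdef
  set S : Matrix (Fin n) (Fin n) ℂ := (1 / (2 * Complex.I) : ℂ) • (A - Aᴴ) with hSdef
  set K : Matrix (Fin n) (Fin n) ℂ := Complex.I • S with hKdef
  set Pa : Matrix (Fin n) (Fin n) ℂ := (α : ℂ) • P with hPadef
  -- basic structure facts
  have hK2 : K = (1 / 2 : ℂ) • (A - Aᴴ) := by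
    rw [hKdef, hSdef, smul_smul]
    congr 1
    field_simp
  have hHe : Hᴴ = H := hRe.isHermitian
  have hKs : Kᴴ = -K := by
    rw [hK2, conjTranspose_smul, conjTranspose_sub, conjTranspose_conjTranspose]
    rw [show star ((1:ℂ)/2) = (1:ℂ)/2 by norm_num, ← smul_neg, neg_sub]
  have hAHK : A = H + K := by
    rw [hHdef, hK2]
    module
  -- positivity of real parts of quadratic forms
  have posH : ∀ v : Fin n → ℂ, v ≠ 0 → 0 < (star v ⬝ᵥ (H *ᵥ v)).re := by
    intro v hv
    have := hRe.re_dotProduct_pos hv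
    simpa using this
  have posPa : ∀ v : Fin n → ℂ, v ≠ 0 → 0 < (star v ⬝ᵥ (Pa *ᵥ v)).re := by
    intro v hv
    have h1 := hP.re_dotProduct_pos hv
    have h2 : star v ⬝ᵥ (Pa *ᵥ v) = (α : ℂ) * (star v ⬝ᵥ (P *ᵥ v)) := by
      rw [hPadef, smul_mulVec, dotProduct_smul, smul_eq_mul]
    rw [h2, Complex.re_ofReal_mul]
    have : 0 < (star v ⬝ᵥ (P *ᵥ v)).re := by simpa using h1
    positivity
  have posK0 : ∀ v : Fin n → ℂ, (star v ⬝ᵥ (K *ᵥ v)).re = 0 := skew_re_zero hKs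
  have posPaH : ∀ v : Fin n → ℂ, v ≠ 0 → 0 < (star v ⬝ᵥ ((Pa + H) *ᵥ v)).re := by
    intro v hv
    rw [add_mulVec, dotProduct_add, Complex.add_re]
    have := posPa v hv; have := posH v hv; linarith
  have posPaK : ∀ v : Fin n → ℂ, v ≠ 0 → 0 < (star v ⬝ᵥ ((Pa + K) *ᵥ v)).re := by
    intro v hv
    rw [add_mulVec, dotProduct_add, Complex.add_re, posK0 v]
    have := posPa v hv; linarith
  have posA : ∀ v : Fin n → ℂ, v ≠ 0 → 0 < (star v ⬝ᵥ (A *ᵥ v)).re := by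
    intro v hv
    rw [hAHK, add_mulVec, dotProduct_add, Complex.add_re, posK0 v]
    have := posH v hv; linarith
  have uPaH : IsUnit (Pa + H) := isUnit_of_posRe posPaH
  have uPaK : IsUnit (Pa + K) := isUnit_of_posRe posPaK
  have uA : IsUnit A := isUnit_of_posRe posA
  have injA : Function.Injective (A.mulVec) := Matrix.mulVec_injective_iff_isUnit.mpr uA
  have part1 : ∃! y : Fin n → ℂ, A.mulVec y = b :=
    ⟨xstar, hstar, fun y hy => injA (hy.trans hstar.symm)⟩
  refine ⟨part1, ?_⟩
  -- trivial case n = 0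
  rcases Nat.eq_zero_or_pos n with hn | hn
  · have hsub : Subsingleton (Fin n → ℂ) := by
      subst hn; exact ⟨fun a b => funext fun i => i.elim0⟩
    have : x = fun _ => xstar := funext fun k => Subsingleton.elim _ _
    rw [this]
    exact tendsto_const_nhds
  -- the square root of αP
  have hPaPD : Pa.PosDef := by
    refine Matrix.PosDef.of_dotProduct_mulVec_pos ?_ ?_
    · show Paᴴ = Pa
      rw [hPadef, conjTranspose_smul, hP.isHermitian.eq]
      congr 1
      simp [Complex.star_def, Complex.conj_ofReal]
    · intro v hv
      rw [Complex.lt_def]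
      constructor
      · simpa using posPa v hv
      · have h1 := hP.dotProduct_mulVec_pos hv
        rw [Complex.lt_def] at h1
        have h2 : star v ⬝ᵥ (Pa *ᵥ v) = (α : ℂ) * (star v ⬝ᵥ (P *ᵥ v)) := by
          rw [hPadef, smul_mulVec, dotProduct_smul, smul_eq_mul]
        rw [h2]
        simp [Complex.mul_im, ← h1.2]
  have hPaPSD := hPaPD.posSemidef
  obtain ⟨Q, hQh', hQQ'⟩ := PHSS.exists_sqrt hPaPSD
  have hQh : Qᴴ = Q := hQh'
  have hQQ : Q * Q = Pa := hQQ'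
  have uQ : IsUnit Q := by
    have h1 : IsUnit (Pa.det) := (Matrix.isUnit_iff_isUnit_det _).mp hPaPD.isUnit
    rw [← hQQ, Matrix.det_mul] at h1
    exact (Matrix.isUnit_iff_isUnit_det _).mpr (isUnit_of_mul_isUnit_left h1)
  have hdetQ : IsUnit Q.det := (Matrix.isUnit_iff_isUnit_det _).mp uQ
  have hQiQ : Q⁻¹ * Q = 1 := Matrix.nonsing_inv_mul _ hdetQ
  have hQQi : Q * Q⁻¹ = 1 := Matrix.mul_nonsing_inv _ hdetQ
  have uQi : IsUnit Q⁻¹ := by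
    refine (Matrix.isUnit_iff_isUnit_det _).mpr ?_
    have h1 : Q⁻¹.det * Q.det = 1 := by
      rw [← Matrix.det_mul, hQiQ, Matrix.det_one]
    exact IsUnit.of_mul_eq_one _ h1
  have hQih : (Q⁻¹)ᴴ = Q⁻¹ := by rw [Matrix.conjTranspose_nonsing_inv, hQh]
  -- transformed matrices
  set tH : Matrix (Fin n) (Fin n) ℂ := Q⁻¹ * H * Q⁻¹ with htHdef
  set tK : Matrix (Fin n) (Fin n) ℂ := Q⁻¹ * K * Q⁻¹ with htKdef
  have htHh : tHᴴ = tH := by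
    rw [htHdef]
    simp [conjTranspose_mul, hQih, hHe, Matrix.mul_assoc]
  have htKs : tKᴴ = -tK := by
    rw [htKdef]
    simp [conjTranspose_mul, hQih, hKs, Matrix.mul_assoc, Matrix.mul_neg, Matrix.neg_mul]
  have hQiv : ∀ v : Fin n → ℂ, v ≠ 0 → Q⁻¹ *ᵥ v ≠ 0 := by
    intro v hv h0
    apply hv
    have := congrArg (fun w => Q *ᵥ w) h0
    simpa [mulVec_cancel' uQ v, mulVec_zero] using this
  have postH : ∀ v : Fin n → ℂ, v ≠ 0 → 0 < (star v ⬝ᵥ (tH *ᵥ v)).re := by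
    intro v hv
    have h1 := posH _ (hQiv v hv)
    have heq : star (Q⁻¹ *ᵥ v) ⬝ᵥ (H *ᵥ (Q⁻¹ *ᵥ v)) = star v ⬝ᵥ (tH *ᵥ v) := by
      rw [mulVec_mulVec, quad Q⁻¹ (H * Q⁻¹) v, hQih, htHdef, Matrix.mul_assoc]
    rwa [heq] at h1
  have u1H : IsUnit ((1 : Matrix (Fin n) (Fin n) ℂ) + tH) := by
    apply isUnit_of_posRe
    intro v hv
    rw [add_mulVec, one_mulVec, dotProduct_add, Complex.add_re]
    have h1 : 0 < (star v ⬝ᵥ v).re := by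
      rw [← enorm_sq]; exact pow_pos (enorm_pos hv) 2
    have := postH v hv; linarith
  have u1K : IsUnit ((1 : Matrix (Fin n) (Fin n) ℂ) + tK) := by
    apply isUnit_of_posRe
    intro v hv
    rw [add_mulVec, one_mulVec, dotProduct_add, Complex.add_re, skew_re_zero htKs v]
    have h1 : 0 < (star v ⬝ᵥ v).re := by
      rw [← enorm_sq]; exact pow_pos (enorm_pos hv) 2
    linarith
  -- the error recurrence
  have hstar' : H *ᵥ xstar + K *ᵥ xstar = b := by
    rw [← add_mulVec, ← hAHK, hstar]
  have E1 : ∀ k, (Pa + H) *ᵥ (xh k - xstar) = (Pa - K) *ᵥ (x k - xstar) := by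
    intro k
    rw [mulVec_sub, mulVec_sub, hhalf k]
    have h2 : (Pa + H) *ᵥ xstar = (Pa - K) *ᵥ xstar + b := by
      rw [add_mulVec, sub_mulVec, ← hstar']
      abel
    rw [h2]
    abel
  have E2 : ∀ k, (Pa + K) *ᵥ (x (k + 1) - xstar) = (Pa - H) *ᵥ (xh k - xstar) := by
    intro k
    rw [mulVec_sub, mulVec_sub, hfull k]
    have h2 : (Pa + K) *ᵥ xstar = (Pa - H) *ᵥ xstar + b := by
      rw [add_mulVec, sub_mulVec, ← hstar']
      abel
    rw [h2]
    abel
  set T : Matrix (Fin n) (Fin n) ℂ :=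
    (Pa + K)⁻¹ * ((Pa - H) * ((Pa + H)⁻¹ * (Pa - K))) with hTdef
  have hrec : ∀ k, x (k + 1) - xstar = T *ᵥ (x k - xstar) := by
    intro k
    have h1 : xh k - xstar = (Pa + H)⁻¹ *ᵥ ((Pa - K) *ᵥ (x k - xstar)) := by
      rw [← E1 k, mulVec_cancel uPaH]
    have h3 : x (k + 1) - xstar = (Pa + K)⁻¹ *ᵥ ((Pa - H) *ᵥ (xh k - xstar)) := by
      rw [← E2 k, mulVec_cancel uPaK]
    rw [h3, h1, hTdef]
    simp only [mulVec_mulVec, Matrix.mul_assoc]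
  -- conjugated iteration matrix
  set G : Matrix (Fin n) (Fin n) ℂ := Q⁻¹ * (Pa + K) with hGdef
  set CH : Matrix (Fin n) (Fin n) ℂ := (1 - tH) * (1 + tH)⁻¹ with hCHdef
  set CS : Matrix (Fin n) (Fin n) ℂ := (1 - tK) * (1 + tK)⁻¹ with hCSdef
  set U : Matrix (Fin n) (Fin n) ℂ := CH * CS with hUdef
  have key1H : (1 : Matrix (Fin n) (Fin n) ℂ) + tH = Q⁻¹ * ((Pa + H) * Q⁻¹) := by
    rw [htHdef, ← hQQ]
    simp only [Matrix.add_mul, Matrix.mul_add, Matrix.mul_assoc, hQQi, Matrix.mul_one]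
    rw [hQiQ]
  have key2H : (1 : Matrix (Fin n) (Fin n) ℂ) - tH = Q⁻¹ * ((Pa - H) * Q⁻¹) := by
    rw [htHdef, ← hQQ]
    simp only [Matrix.sub_mul, Matrix.mul_sub, Matrix.mul_assoc, hQQi, Matrix.mul_one]
    rw [hQiQ]
  have key1K : (1 : Matrix (Fin n) (Fin n) ℂ) + tK = Q⁻¹ * ((Pa + K) * Q⁻¹) := by
    rw [htKdef, ← hQQ]
    simp only [Matrix.add_mul, Matrix.mul_add, Matrix.mul_assoc, hQQi, Matrix.mul_one]
    rw [hQiQ]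
  have key2K : (1 : Matrix (Fin n) (Fin n) ℂ) - tK = Q⁻¹ * ((Pa - K) * Q⁻¹) := by
    rw [htKdef, ← hQQ]
    simp only [Matrix.sub_mul, Matrix.mul_sub, Matrix.mul_assoc, hQQi, Matrix.mul_one]
    rw [hQiQ]
  have inv1H : ((1 : Matrix (Fin n) (Fin n) ℂ) + tH)⁻¹ = Q * ((Pa + H)⁻¹ * Q) := by
    rw [key1H, Matrix.mul_inv_rev, Matrix.mul_inv_rev,
      Matrix.nonsing_inv_nonsing_inv _ hdetQ, Matrix.mul_assoc]
  have inv1K : ((1 : Matrix (Fin n) (Fin n) ℂ) + tK)⁻¹ = Q * ((Pa + K)⁻¹ * Q) := by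
    rw [key1K, Matrix.mul_inv_rev, Matrix.mul_inv_rev,
      Matrix.nonsing_inv_nonsing_inv _ hdetQ, Matrix.mul_assoc]
  have hPaKi : (Pa + K)⁻¹ * (Pa + K) = 1 :=
    Matrix.nonsing_inv_mul _ ((Matrix.isUnit_iff_isUnit_det _).mp uPaK)
  have hGU : U * G = G * T := by
    rw [hUdef, hCHdef, hCSdef, hGdef, hTdef, key2H, key2K, inv1H, inv1K]
    simp only [Matrix.mul_assoc, cancel₁ uQ, cancel₂ uQ, cancel₁ uPaK, cancel₂ uPaK,
      cancel₁ uPaH, cancel₂ uPaH, hQiQ, hQQi, hPaKi, Matrix.mul_one, Matrix.one_mul]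
  set w0 : Fin n → ℂ := G *ᵥ (x 0 - xstar) with hw0def
  clear_value w0
  have hw : ∀ k, G *ᵥ (x k - xstar) = (U ^ k) *ᵥ w0 := by
    intro k
    induction k with
    | zero => rw [pow_zero, one_mulVec, hw0def]
    | succ k ih =>
      calc G *ᵥ (x (k + 1) - xstar) = G *ᵥ (T *ᵥ (x k - xstar)) := by rw [hrec k]
      _ = (G * T) *ᵥ (x k - xstar) := mulVec_mulVec _ _ _
      _ = (U * G) *ᵥ (x k - xstar) := by rw [hGU]
      _ = U *ᵥ (G *ᵥ (x k - xstar)) := (mulVec_mulVec _ _ _).symm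
      _ = U *ᵥ ((U ^ k) *ᵥ w0) := by rw [ih]
      _ = (U ^ (k + 1)) *ᵥ w0 := by rw [pow_succ']; exact mulVec_mulVec _ _ _
  -- norm bounds
  have bCS : ∀ v : Fin n → ℂ, PHSS.enorm (CS *ᵥ v) = PHSS.enorm v := by
    intro v
    have hy : (1 + tK) *ᵥ ((1 + tK)⁻¹ *ᵥ v) = v := mulVec_cancel' u1K v
    calc PHSS.enorm (CS *ᵥ v) = PHSS.enorm ((1 - tK) *ᵥ ((1 + tK)⁻¹ *ᵥ v)) := by
          rw [hCSdef, ← mulVec_mulVec]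
    _ = PHSS.enorm ((1 + tK) *ᵥ ((1 + tK)⁻¹ *ᵥ v)) := key_eq htKs _
    _ = PHSS.enorm v := by rw [hy]
  have bCH : ∀ v : Fin n → ℂ, v ≠ 0 → PHSS.enorm (CH *ᵥ v) < PHSS.enorm v := by
    intro v hv
    have hy : (1 + tH) *ᵥ ((1 + tH)⁻¹ *ᵥ v) = v := mulVec_cancel' u1H v
    have hy0 : (1 + tH)⁻¹ *ᵥ v ≠ 0 := by
      intro h0
      apply hv
      rw [← hy, h0, mulVec_zero]
    calc PHSS.enorm (CH *ᵥ v) = PHSS.enorm ((1 - tH) *ᵥ ((1 + tH)⁻¹ *ᵥ v)) := by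
          rw [hCHdef, ← mulVec_mulVec]
    _ < PHSS.enorm ((1 + tH) *ᵥ ((1 + tH)⁻¹ *ᵥ v)) := key_lt htHh (postH _ hy0)
    _ = PHSS.enorm v := by rw [hy]
  obtain ⟨c, hc0, hc1, hcb⟩ := exists_contraction hn CH bCH
  have bound : ∀ k, PHSS.enorm ((U ^ k) *ᵥ w0) ≤ c ^ k * PHSS.enorm w0 := by
    intro k
    induction k with
    | zero => rw [pow_zero, one_mulVec, pow_zero, one_mul]
    | succ k ih =>
      have h1 : (U ^ (k + 1)) *ᵥ w0 = CH *ᵥ (CS *ᵥ ((U ^ k) *ᵥ w0)) := by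
        rw [mulVec_mulVec, mulVec_mulVec, pow_succ', hUdef, Matrix.mul_assoc]
      rw [h1]
      calc PHSS.enorm (CH *ᵥ (CS *ᵥ ((U ^ k) *ᵥ w0)))
          ≤ c * PHSS.enorm (CS *ᵥ ((U ^ k) *ᵥ w0)) := hcb _
      _ = c * PHSS.enorm ((U ^ k) *ᵥ w0) := by rw [bCS]
      _ ≤ c * (c ^ k * PHSS.enorm w0) := mul_le_mul_of_nonneg_left ih hc0
      _ = c ^ (k + 1) * PHSS.enorm w0 := by rw [pow_succ']; ring
  -- conclude convergence
  have uG : IsUnit G := uQi.mul uPaK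
  obtain ⟨C2, hC20, hC2b⟩ := enorm_mulVec_le (n := n) G⁻¹
  have he : ∀ k, x k - xstar = G⁻¹ *ᵥ ((U ^ k) *ᵥ w0) := by
    intro k
    rw [← hw k, mulVec_cancel uG]
  have hnorm : ∀ k, PHSS.enorm (x k - xstar) ≤ C2 * (c ^ k * PHSS.enorm w0) := by
    intro k
    rw [he k]
    calc PHSS.enorm (G⁻¹ *ᵥ ((U ^ k) *ᵥ w0)) ≤ C2 * PHSS.enorm ((U ^ k) *ᵥ w0) := hC2b _
    _ ≤ C2 * (c ^ k * PHSS.enorm w0) := mul_le_mul_of_nonneg_left (bound k) hC20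
  have hlim0 : Filter.Tendsto (fun k => C2 * (c ^ k * PHSS.enorm w0)) Filter.atTop (nhds 0) := by
    have h1 : Filter.Tendsto (fun k : ℕ => c ^ k) Filter.atTop (nhds 0) :=
      tendsto_pow_atTop_nhds_zero_of_lt_one hc0 hc1
    have h2 := (h1.mul_const (PHSS.enorm w0)).const_mul C2
    simpa using h2
  have hlim : Filter.Tendsto (fun k => PHSS.enorm (x k - xstar)) Filter.atTop (nhds 0) :=
    squeeze_zero (fun k => enorm_nonneg _) hnorm hlim0
  have hlimE : Filter.Tendsto
      (fun k => (WithLp.equiv 2 (Fin n → ℂ)).symm (x k - xstar)) Filter.atTop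
      (nhds (0 : EuclideanSpace ℂ (Fin n))) := by
    rw [tendsto_zero_iff_norm_tendsto_zero]
    exact hlim
  have hlimPi : Filter.Tendsto (fun k => x k - xstar) Filter.atTop
      (nhds (0 : Fin n → ℂ)) := by
    have hcont := (PiLp.continuous_ofLp 2 (fun _ : Fin n => ℂ)).tendsto
      (0 : EuclideanSpace ℂ (Fin n))
    have := hcont.comp hlimE
    exact this
  have := hlimPi.add (tendsto_const_nhds (x := xstar) (f := Filter.atTop))
  simpa using this
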